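/- arXiv:1607.08717 — 2 statements merged into one kernel-verified Lean document; each statement's English description precedes it below -/
import Mathlib

section
/- Let U ⊆ ℝ^d be open, Φ : ℝ^d → ℝ twice continuously differentiable, C : ℝ^d → S^d continuously differentiable, b : ℝ^d → ℝ^d, and v ∈ ℝ^d. Assume that for every x ∈ U: (i) C(x)∇Φ(x) = Φ(x)·v (i.e., ∇Φ(x)ᵀC(x) = Φ(x)vᵀ), and (ii) ⟨∇Φ(x), b(x) − ½ Σ_{j=1}^d D(Ce_j)(x)(e_j)⟩ ≤ 0. Then for every x ∈ U with Φ(x) ≠ 0: ⟨∇Φ(x), b(x)⟩ + ½ Tr(C(x)∇²Φ(x)) − (1/(2Φ(x))) ⟨∇Φ(x), C(x)∇Φ(x)⟩ ≤ 0. -/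
open Matrix Set Asymptotics
open scoped RealInnerProductSpace NNReal

noncomputable section

/-- `ℝ^d` with the Euclidean inner product and norm. -/
abbrev Vec (d : ℕ) := EuclideanSpace ℝ (Fin d)

/-- real `d × d` matrices. -/
abbrev Mat (d : ℕ) := Matrix (Fin d) (Fin d) ℝ

attribute [local instance] Matrix.normedAddCommGroup Matrix.normedSpace

/-- A matrix acting on a vector of `ℝ^d`. -/
def mv {d : ℕ} (A : Mat d) (u : Vec d) : Vec d := WithLp.toLp 2 (A.mulVec u)

/-- The `j`-th canonical basis vector of `ℝ^d`. -/
def evec {d : ℕ} (j : Fin d) : Vec d := EuclideanSpace.single j 1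

/-- The first-order normal cone `N¹_D(x)`. -/
def normalCone1 {d : ℕ} (D : Set (Vec d)) (x : Vec d) : Set (Vec d) :=
  {u | ∀ ε > (0:ℝ), ∃ δ > (0:ℝ), ∀ y ∈ D, ‖y - x‖ ≤ δ → ⟪u, y - x⟫ ≤ ε * ‖y - x‖}

/-- The second-order normal cone `N²_D(x) ⊆ ℝ^d × S^d`. -/
def normalCone2 {d : ℕ} (D : Set (Vec d)) (x : Vec d) : Set (Vec d × Mat d) :=
  {p | p.2.IsSymm ∧ ∀ ε > (0:ℝ), ∃ δ > (0:ℝ), ∀ y ∈ D, ‖y - x‖ ≤ δ →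
    ⟪p.1, y - x⟫ + (1/2:ℝ) * ⟪y - x, mv p.2 (y - x)⟫ ≤ ε * ‖y - x‖^2}

/-- The first-order normal cone for subsets of `ℝ`. -/
def normalConeR (D : Set ℝ) (x : ℝ) : Set ℝ :=
  {u | ∀ ε > (0:ℝ), ∃ δ > (0:ℝ), ∀ y ∈ D, |y - x| ≤ δ → u * (y - x) ≤ ε * |y - x|}

/-- The matrix of the orthogonal projection of `ℝ^d` onto the column space (range) of `A`,
i.e. `A A⁺` with `A⁺` the Moore–Penrose pseudoinverse. -/
def projRange {d : ℕ} (A : Mat d) : Mat d :=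
  Matrix.toEuclideanLin.symm
    (((LinearMap.range (Matrix.toEuclideanLin A)).subtypeL.comp
      (Submodule.orthogonalProjectionOnto (LinearMap.range (Matrix.toEuclideanLin A)))).toLinearMap)

/-- The element of `ℝ²` with the two given coordinates. -/
def vec2 (a b : ℝ) : Vec 2 := WithLp.toLp 2 ![a, b]

/-- The Hessian matrix of `φ : ℝ^d → ℝ` at `x`. -/
def hessMat {d : ℕ} (φ : Vec d → ℝ) (x : Vec d) : Mat d :=
  Matrix.of fun i j => fderiv ℝ (fun y => fderiv ℝ φ y (evec j)) x (evec i)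


section stmt12aux
variable {d : ℕ}

lemma inner_eq_sum' (u w : Vec d) : ⟪u, w⟫ = ∑ m, u m * w m := by
  simp [PiLp.inner_apply, RCLike.inner_apply, conj_trivial]
  exact Finset.sum_congr rfl fun _ _ => mul_comm _ _

lemma grad_apply' (Φ : Vec d → ℝ) (y : Vec d) (m : Fin d) :
    gradient Φ y m = fderiv ℝ Φ y (evec m) := by
  have h : ⟪gradient Φ y, evec m⟫ = fderiv ℝ Φ y (evec m) :=
    InnerProductSpace.toDual_symm_apply
  rw [← h, evec]
  simp [EuclideanSpace.inner_single_right m (1:ℝ) (gradient Φ y)]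

/-- entry extraction as a continuous linear map -/
def entryCLM' (i j : Fin d) : Mat d →L[ℝ] ℝ :=
  LinearMap.toContinuousLinearMap (Matrix.entryLinearMap ℝ ℝ i j)

def colLM' (j : Fin d) : Mat d →ₗ[ℝ] Vec d where
  toFun A := (WithLp.equiv 2 (Fin d → ℝ)).symm (fun m => A m j)
  map_add' _ _ := rfl
  map_smul' _ _ := rfl

def colCLM' (j : Fin d) : Mat d →L[ℝ] Vec d :=
  LinearMap.toContinuousLinearMap (colLM' j)

lemma mv_evec' (A : Mat d) (j : Fin d) : mv A (evec j) = colCLM' j A := by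
  ext m
  simp [mv, colCLM', colLM', Matrix.mulVec, dotProduct, evec, EuclideanSpace.single_apply,
    mul_ite, mul_one, mul_zero]

lemma hess_symm' (Φ : Vec d → ℝ) (hΦ : ContDiff ℝ 2 Φ) (x : Vec d) (i j : Fin d) :
    fderiv ℝ (fun y => fderiv ℝ Φ y (evec j)) x (evec i)
      = fderiv ℝ (fun y => fderiv ℝ Φ y (evec i)) x (evec j) := by
  have hfd : ContDiff ℝ 1 (fderiv ℝ Φ) := hΦ.fderiv_right (by norm_num)
  have key : ∀ m w, fderiv ℝ (fun y => fderiv ℝ Φ y (evec m)) x w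
      = fderiv ℝ (fderiv ℝ Φ) x w (evec m) := by
    intro m w
    rw [fderiv_clm_apply (hfd.differentiable (by norm_num) x) (differentiableAt_const _)]
    simp
  rw [key, key]
  exact (hΦ.contDiffAt.isSymmSndFDerivAt (by simp [minSmoothness_of_isRCLikeNormedField])).eq _ _

lemma centry_fd' (C : Vec d → Mat d) (hC : Differentiable ℝ C) (x w : Vec d) (i j : Fin d) :
    fderiv ℝ (fun y => C y i j) x w = (fderiv ℝ C x w) i j := by
  have h : (fun y => C y i j) = ⇑(entryCLM' i j) ∘ C := rfl
  rw [h, ((entryCLM' i j).hasFDerivAt.comp x (hC x).hasFDerivAt).fderiv]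
  rfl

lemma col_fd' (C : Vec d → Mat d) (hC : Differentiable ℝ C) (x w : Vec d) (j m : Fin d) :
    (fderiv ℝ (fun y => mv (C y) (evec j)) x w) m = (fderiv ℝ C x w) m j := by
  have h : (fun y => mv (C y) (evec j)) = ⇑(colCLM' j) ∘ C := by
    funext y; exact mv_evec' (C y) j
  rw [h, ((colCLM' j).hasFDerivAt.comp x (hC x).hasFDerivAt).fderiv]
  rfl

end stmt12aux

/-- the deterministic inequality underlying the boundary non-attainment
criterion (McKean's argument). -/
theorem stmt12 {d : ℕ} (U : Set (Vec d)) (hU : IsOpen U)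
    (Φ : Vec d → ℝ) (hΦ : ContDiff ℝ 2 Φ)
    (C : Vec d → Mat d) (hCsymm : ∀ y, (C y).IsSymm) (hC1 : ContDiff ℝ 1 C)
    (b : Vec d → Vec d) (v : Vec d)
    (h1 : ∀ x ∈ U, mv (C x) (gradient Φ x) = Φ x • v)
    (h2 : ∀ x ∈ U,
      ⟪gradient Φ x, b x - (1/2 : ℝ) •
        ∑ j, fderiv ℝ (fun y => mv (C y) (evec j)) x (evec j)⟫ ≤ 0) :
    ∀ x ∈ U, Φ x ≠ 0 →
      ⟪gradient Φ x, b x⟫ + (1/2 : ℝ) * (C x * hessMat Φ x).trace -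
        1 / (2 * Φ x) * ⟪gradient Φ x, mv (C x) (gradient Φ x)⟫ ≤ 0 := by
  intro x hx hPhx
  have hPdiff : Differentiable ℝ Φ := hΦ.differentiable (by norm_num)
  have hfd : ContDiff ℝ 1 (fderiv ℝ Φ) := hΦ.fderiv_right (by norm_num)
  have hgm : ∀ m : Fin d, Differentiable ℝ (fun y => fderiv ℝ Φ y (evec m)) :=
    fun m => (hfd.differentiable (by norm_num)).clm_apply (differentiable_const _)
  have hCdiff : Differentiable ℝ C := hC1.differentiable (by norm_num)
  have hCe : ∀ i j : Fin d, Differentiable ℝ (fun y => C y i j) := by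
    intro i j
    have h : (fun y => C y i j) = ⇑(entryCLM' i j) ∘ C := rfl
    rw [h]; exact (entryCLM' i j).differentiable.comp hCdiff
  -- the key differentiated identity
  have key : ∀ k j : Fin d,
      (∑ m, (C x k m * fderiv ℝ (fun y => fderiv ℝ Φ y (evec m)) x (evec j)
        + fderiv ℝ Φ x (evec m) * (fderiv ℝ C x (evec j)) k m))
      = fderiv ℝ Φ x (evec j) * v k := by
    intro k j
    have hev : (fun y => ∑ m, C y k m * fderiv ℝ Φ y (evec m)) =ᶠ[nhds x]
        (fun y => Φ y * v k) := by
      filter_upwards [hU.mem_nhds hx] with y hy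
      have h := congrArg (fun u : Vec d => u k) (h1 y hy)
      simpa [mv, Matrix.mulVec, dotProduct, grad_apply', PiLp.smul_apply, smul_eq_mul] using h
    have hterm : ∀ m : Fin d,
        fderiv ℝ (fun y => C y k m * fderiv ℝ Φ y (evec m)) x (evec j)
        = C x k m * fderiv ℝ (fun y => fderiv ℝ Φ y (evec m)) x (evec j)
          + fderiv ℝ Φ x (evec m) * (fderiv ℝ C x (evec j)) k m := by
      intro m
      rw [fderiv_fun_mul (hCe k m x) (hgm m x)]
      simp [smul_eq_mul, centry_fd' C hCdiff x (evec j) k m]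
    have hsum : fderiv ℝ (fun y => ∑ m, C y k m * fderiv ℝ Φ y (evec m)) x
        = ∑ m, fderiv ℝ (fun y => C y k m * fderiv ℝ Φ y (evec m)) x :=
      fderiv_fun_sum (fun m _ => ((hCe k m x).mul (hgm m x)))
    have hR : fderiv ℝ (fun y => Φ y * v k) x (evec j)
        = fderiv ℝ Φ x (evec j) * v k := by
      rw [fderiv_mul_const (hPdiff x)]
      simp [smul_eq_mul, mul_comm]
    calc (∑ m, (C x k m * fderiv ℝ (fun y => fderiv ℝ Φ y (evec m)) x (evec j)
        + fderiv ℝ Φ x (evec m) * (fderiv ℝ C x (evec j)) k m))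
        = ∑ m, fderiv ℝ (fun y => C y k m * fderiv ℝ Φ y (evec m)) x (evec j) := by
          exact (Finset.sum_congr rfl fun m _ => (hterm m).symm)
      _ = fderiv ℝ (fun y => ∑ m, C y k m * fderiv ℝ Φ y (evec m)) x (evec j) := by
          rw [hsum]; simp
      _ = fderiv ℝ (fun y => Φ y * v k) x (evec j) := by rw [hev.fderiv_eq]
      _ = fderiv ℝ Φ x (evec j) * v k := hR
  have main : (∑ j, ∑ m, C x j m * fderiv ℝ (fun y => fderiv ℝ Φ y (evec m)) x (evec j))
      + (∑ j, ∑ m, fderiv ℝ Φ x (evec m) * (fderiv ℝ C x (evec j)) j m)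
      = ∑ j, fderiv ℝ Φ x (evec j) * v j := by
    rw [← Finset.sum_add_distrib]
    refine Finset.sum_congr rfl fun j _ => ?_
    rw [← Finset.sum_add_distrib]
    exact key j j
  have hMsymm : ∀ (w : Vec d) (i j : Fin d),
      (fderiv ℝ C x w) i j = (fderiv ℝ C x w) j i := by
    intro w i j
    have hfun : (fun y => C y i j) = (fun y => C y j i) :=
      funext fun y => ((hCsymm y).apply i j).symm
    rw [← centry_fd' C hCdiff x w i j, hfun, centry_fd' C hCdiff x w j i]
  have htr : (C x * hessMat Φ x).trace
      = ∑ j, ∑ m, C x j m * fderiv ℝ (fun y => fderiv ℝ Φ y (evec m)) x (evec j) := by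
    rw [Matrix.trace]
    refine Finset.sum_congr rfl fun j _ => ?_
    rw [Matrix.diag_apply, Matrix.mul_apply]
    refine Finset.sum_congr rfl fun m _ => ?_
    rw [show hessMat Φ x m j = fderiv ℝ (fun y => fderiv ℝ Φ y (evec j)) x (evec m) from rfl]
    rw [hess_symm' Φ hΦ x m j]
  have hS : ⟪gradient Φ x, ∑ j, fderiv ℝ (fun y => mv (C y) (evec j)) x (evec j)⟫
      = ∑ j, ∑ m, fderiv ℝ Φ x (evec m) * (fderiv ℝ C x (evec j)) j m := by
    rw [inner_sum]
    refine Finset.sum_congr rfl fun j _ => ?_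
    rw [inner_eq_sum']
    refine Finset.sum_congr rfl fun m _ => ?_
    rw [col_fd' C hCdiff x (evec j) j m, grad_apply', hMsymm (evec j) m j]
  have hVeq : ⟪gradient Φ x, mv (C x) (gradient Φ x)⟫ = Φ x * ⟪gradient Φ x, v⟫ := by
    rw [h1 x hx, real_inner_smul_right]
  have hVsum : ⟪gradient Φ x, v⟫ = ∑ j, fderiv ℝ Φ x (evec j) * v j := by
    rw [inner_eq_sum']
    exact Finset.sum_congr rfl fun j _ => by rw [grad_apply']
  have hb : ⟪gradient Φ x, b x⟫ ≤ (1/2 : ℝ) *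
      ⟪gradient Φ x, ∑ j, fderiv ℝ (fun y => mv (C y) (evec j)) x (evec j)⟫ := by
    have h := h2 x hx
    rw [inner_sub_right, real_inner_smul_right] at h
    linarith
  have hfin : (C x * hessMat Φ x).trace
      + ⟪gradient Φ x, ∑ j, fderiv ℝ (fun y => mv (C y) (evec j)) x (evec j)⟫
      = ⟪gradient Φ x, v⟫ := by
    rw [htr, hS, hVsum]; exact main
  have hhalf : 1 / (2 * Φ x) * ⟪gradient Φ x, mv (C x) (gradient Φ x)⟫
      = ⟪gradient Φ x, v⟫ / 2 := by
    rw [hVeq]; field_simp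
  rw [hhalf]
  linarith
end
end

section
/- Let D ⊆ ℝ^d, let C : ℝ^d → S^d be continuously differentiable with locally Lipschitz derivative, let x ∈ D, w ∈ ℝ^d, T > 0, and let y : [0, T] → ℝ^d be differentiable with y(0) = x, y′(t) = C(y(t))w for all t ∈ [0, T], and y(t) ∈ D for all t ∈ [0, T]. Let (u, v) ∈ N²_D(x) and assume C(x)u = 0. Then ⟨u, D(Cw)(x)(C(x)w)⟩ + ⟨C(x)w, v · C(x)w⟩ ≤ 0. -/
open Matrix Set Asymptotics
open scoped RealInnerProductSpace NNReal

noncomputable section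

attribute [local instance] Matrix.normedAddCommGroup Matrix.normedSpace

/-- The operator-norm metric on `Vec d →L[ℝ] Mat d` (sup norm on matrices), which instance
search no longer finds by itself. -/
instance instPseudoEMetricSpaceCLMVecMat {d : ℕ} : PseudoEMetricSpace (Vec d →L[ℝ] Mat d) :=
  letI : NormedAddCommGroup (Vec d →L[ℝ] Mat d) :=
    @ContinuousLinearMap.toNormedAddCommGroup ℝ ℝ (Vec d) (Mat d) _ _ _ _ _ _ (RingHom.id ℝ) _
  inferInstance


section Stmt14Aux

variable {d : ℕ}

/-- `mv A` as a continuous linear map. -/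
def mvCLM (A : Mat d) : Vec d →L[ℝ] Vec d :=
  LinearMap.toContinuousLinearMap
    { toFun := fun p => mv A p
      map_add' := fun p q => by
        ext i
        simp [mv, Matrix.mulVec, dotProduct, mul_add, Finset.sum_add_distrib]
      map_smul' := fun c p => by
        ext i
        simp [mv, Matrix.mulVec, dotProduct, Finset.mul_sum, mul_left_comm] }

@[simp] lemma mvCLM_apply (A : Mat d) (p : Vec d) : mvCLM A p = mv A p := rfl

/-- `A ↦ mv A w` as a continuous linear map on matrices. -/
def mulVecWCLM (w : Vec d) : Mat d →L[ℝ] Vec d :=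
  LinearMap.toContinuousLinearMap
    { toFun := fun A => mv A w
      map_add' := fun A B => by
        ext i; simp [mv, Matrix.add_mulVec]
      map_smul' := fun c A => by
        ext i; simp [mv, Matrix.smul_mulVec] }

@[simp] lemma mulVecWCLM_apply (w : Vec d) (A : Mat d) : mulVecWCLM w A = mv A w := rfl

lemma inner_mv_left (A : Mat d) (p q : Vec d) : ⟪mv A p, q⟫ = ⟪p, mv Aᵀ q⟫ := by
  simp only [mv, PiLp.inner_apply, RCLike.inner_apply, conj_trivial, PiLp.toLp_apply,
    Matrix.mulVec, dotProduct, Matrix.transpose_apply, Finset.mul_sum, Finset.sum_mul]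
  rw [Finset.sum_comm]
  exact Finset.sum_congr rfl fun _ _ => Finset.sum_congr rfl fun _ _ => by ring

lemma mv_zero (A : Mat d) : mv A (0 : Vec d) = 0 := by
  ext i; simp [mv, Matrix.mulVec, dotProduct]

end Stmt14Aux

set_option maxHeartbeats 1000000 in
/-- the second-order tangency inequality along the flow `y' = C(y)w`
staying in `D`, for `(u, v) ∈ N²_D(x)` with `C(x)u = 0`. -/
theorem stmt14 {d : ℕ} (D : Set (Vec d))
    (C : Vec d → Mat d) (hCsymm : ∀ y, (C y).IsSymm)
    (hC1 : ContDiff ℝ 1 C) (hClip : LocallyLipschitz (fderiv ℝ C))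
    (x : Vec d) (hx : x ∈ D) (w : Vec d) (T : ℝ) (hT : 0 < T)
    (y : ℝ → Vec d) (hy0 : y 0 = x)
    (hyD : ∀ t ∈ Set.Icc 0 T, y t ∈ D)
    (hyder : ∀ t ∈ Set.Icc 0 T, HasDerivWithinAt y (mv (C (y t)) w) (Set.Icc 0 T) t)
    (u : Vec d) (v : Mat d) (huv : (u, v) ∈ normalCone2 D x)
    (hker : mv (C x) u = 0) :
    ⟪u, fderiv ℝ (fun z => mv (C z) w) x (mv (C x) w)⟫ +
      ⟪mv (C x) w, mv v (mv (C x) w)⟫ ≤ 0 := by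
  obtain ⟨hvsymm, hcone⟩ := huv
  have hCdiff : Differentiable ℝ C := hC1.differentiable one_ne_zero
  set g : Vec d → Vec d := fun z => mv (C z) w with hg_def
  have hgD : ∀ z, HasFDerivAt g ((mulVecWCLM w).comp (fderiv ℝ C z)) z := fun z =>
    (mulVecWCLM w).hasFDerivAt.comp z (hCdiff z).hasFDerivAt
  set a : Vec d := mv (C x) w with ha_def
  set b : Vec d := fderiv ℝ g x a with hb_def
  -- symmetry of v as a bilinear form
  have hsymv : ∀ p q : Vec d, ⟪p, mv v q⟫ = ⟪q, mv v p⟫ := by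
    intro p q
    rw [real_inner_comm, inner_mv_left, hvsymm.eq]
  -- a = g x, and ⟪u, a⟫ = 0
  have hgx : g x = a := rfl
  have hua : ⟪u, a⟫ = 0 := by
    rw [real_inner_comm, inner_mv_left, (hCsymm x).eq, hker, inner_zero_right]
  -- the function φ and its derivative ψ
  set φ : ℝ → ℝ := fun t => ⟪u, y t - x⟫ + (1/2 : ℝ) * ⟪y t - x, mv v (y t - x)⟫ with hφ_def
  set ψ : ℝ → ℝ := fun t => ⟪u, g (y t)⟫ + ⟪g (y t), mv v (y t - x)⟫ with hψ_def
  have hz : ∀ t ∈ Set.Icc 0 T, HasDerivWithinAt (fun t => y t - x) (g (y t)) (Set.Icc 0 T) t :=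
    fun t ht => (hyder t ht).sub_const x
  have hφder : ∀ t ∈ Set.Icc 0 T, HasDerivWithinAt φ (ψ t) (Set.Icc 0 T) t := by
    intro t ht
    have h1 := hz t ht
    have hmv : HasDerivWithinAt (fun t => mv v (y t - x)) (mv v (g (y t))) (Set.Icc 0 T) t := by
      have := (mvCLM v).hasFDerivAt.comp_hasDerivWithinAt t h1
      exact this
    have hA := (hasDerivWithinAt_const t (Set.Icc 0 T) u).inner ℝ h1
    have hB := h1.inner ℝ hmv
    have := hA.add (hB.const_mul (1/2 : ℝ))
    refine this.congr_deriv ?_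
    symm
    simp only [hψ_def, inner_zero_left, add_zero]
    rw [hsymv (y t - x) (g (y t))]
    ring
  -- derivative of ψ at 0
  have h0T : (0:ℝ) ∈ Set.Icc 0 T := ⟨le_rfl, hT.le⟩
  have hy0der : HasDerivWithinAt y a (Set.Icc 0 T) 0 := by
    have := hyder 0 h0T; rwa [hy0] at this
  have hgyder : HasDerivWithinAt (fun t => g (y t)) b (Set.Icc 0 T) 0 := by
    have hfd : HasFDerivAt g ((mulVecWCLM w).comp (fderiv ℝ C x)) (y 0) := by
      rw [hy0]; exact hgD x
    have h := hfd.comp_hasDerivWithinAt (0:ℝ) hy0der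
    have hb : b = ((mulVecWCLM w).comp (fderiv ℝ C x)) a := by
      rw [hb_def, (hgD x).fderiv]
    rw [hb]
    exact h
  have hψder : HasDerivWithinAt ψ (⟪u, b⟫ + ⟪a, mv v a⟫) (Set.Icc 0 T) 0 := by
    have hz0 := hz 0 h0T
    have hmv : HasDerivWithinAt (fun t => mv v (y t - x)) (mv v (g (y 0))) (Set.Icc 0 T) 0 := by
      have := (mvCLM v).hasFDerivAt.comp_hasDerivWithinAt 0 hz0
      exact this
    have hA := (hasDerivWithinAt_const (0:ℝ) (Set.Icc 0 T) u).inner ℝ hgyder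
    have hB := hgyder.inner ℝ hmv
    have := hA.add hB
    refine this.congr_deriv ?_
    symm
    have h0 : mv v (y 0 - x) = 0 := by rw [hy0, sub_self, mv_zero]
    rw [h0]
    simp [hy0, hgx]
  -- ψ 0 = 0
  have hψ0 : ψ 0 = 0 := by
    show ⟪u, g (y 0)⟫ + ⟪g (y 0), mv v (y 0 - x)⟫ = 0
    rw [hy0, sub_self, mv_zero, inner_zero_right, hgx, hua, add_zero]
  -- continuity
  have hycont : ContinuousOn y (Set.Icc 0 T) := fun t ht => (hyder t ht).continuousWithinAt
  have hgcont : Continuous g := (mulVecWCLM w).continuous.comp hC1.continuous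
  have hgycont : ContinuousOn (fun t => g (y t)) (Set.Icc 0 T) := hgcont.comp_continuousOn hycont
  have hzcont : ContinuousOn (fun t => y t - x) (Set.Icc 0 T) := hycont.sub continuousOn_const
  have hmvcont : ContinuousOn (fun t => mv v (y t - x)) (Set.Icc 0 T) :=
    (mvCLM v).continuous.comp_continuousOn hzcont
  have hψcont : ContinuousOn ψ (Set.Icc 0 T) :=
    (continuousOn_const.inner hgycont).add (hgycont.inner hmvcont)
  have hφcont : ContinuousOn φ (Set.Icc 0 T) :=
    (continuousOn_const.inner hzcont).add
      (continuousOn_const.mul (hzcont.inner hmvcont))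
  have hφ0 : φ 0 = 0 := by simp [hφ_def, hy0]
  -- main estimate
  set S : ℝ := ⟪u, b⟫ + ⟪a, mv v a⟫ with hS_def
  show S ≤ 0
  have hM : (0:ℝ) < ‖a‖ + 1 := by positivity
  set M : ℝ := ‖a‖ + 1 with hM_def
  refine le_of_forall_pos_le_add ?_
  intro η hη
  rw [zero_add]
  set ε : ℝ := η / (4 * M^2) with hε_def
  have hε : 0 < ε := by positivity
  obtain ⟨δ₁, hδ₁, hδ₁p⟩ := hcone ε hε
  -- lower bound on ψ near 0
  have hslope : Filter.Tendsto (slope ψ 0) (nhdsWithin 0 (Set.Icc 0 T \ {0})) (nhds S) :=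
    hasDerivWithinAt_iff_tendsto_slope.1 hψder
  have hev : ∀ᶠ s in nhdsWithin 0 (Set.Icc 0 T \ {0}), S - η/2 < slope ψ 0 s :=
    hslope.eventually (eventually_gt_nhds (by linarith))
  obtain ⟨δ₂, hδ₂, hδ₂p⟩ := Metric.mem_nhdsWithin_iff.1 hev
  -- bound ‖y s - x‖ ≤ M s near 0
  have hslopey : Filter.Tendsto (fun s => ‖slope y 0 s‖)
      (nhdsWithin 0 (Set.Icc 0 T \ {0})) (nhds ‖a‖) :=
    (hasDerivWithinAt_iff_tendsto_slope.1 hy0der).norm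
  have hevy : ∀ᶠ s in nhdsWithin 0 (Set.Icc 0 T \ {0}), ‖slope y 0 s‖ < M :=
    hslopey.eventually (eventually_lt_nhds (by rw [hM_def]; linarith))
  obtain ⟨δ₃, hδ₃, hδ₃p⟩ := Metric.mem_nhdsWithin_iff.1 hevy
  -- choice of t
  set t : ℝ := min (min (δ₂/2) (δ₃/2)) (min (δ₁/M) T) with ht_def
  have htpos : 0 < t := by
    apply lt_min (lt_min (by linarith) (by linarith)) (lt_min (by positivity) hT)
  have htT : t ≤ T := le_trans (min_le_right _ _) (min_le_right _ _)
  have htδ₁M : t ≤ δ₁/M := le_trans (min_le_right _ _) (min_le_left _ _)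
  have htδ₂ : t < δ₂ := lt_of_le_of_lt (le_trans (min_le_left _ _) (min_le_left _ _)) (by linarith)
  have htδ₃ : t < δ₃ := lt_of_le_of_lt (le_trans (min_le_left _ _) (min_le_right _ _)) (by linarith)
  -- norm bound at points in (0, t]
  have hnb : ∀ s, 0 < s → s ≤ t → ‖y s - x‖ ≤ M * s := by
    intro s hs hst
    have hsmem : s ∈ Metric.ball (0:ℝ) δ₃ ∩ (Set.Icc 0 T \ {0}) := by
      constructor
      · simp [Real.ball_eq_Ioo]; constructor <;> [linarith; linarith]
      · exact ⟨⟨hs.le, le_trans hst htT⟩, by simp [hs.ne']⟩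
    have := hδ₃p hsmem
    simp only [Set.mem_setOf_eq] at this
    have hsl : slope y 0 s = s⁻¹ • (y s - x) := by
      simp [slope_def_module, hy0]
    rw [hsl, norm_smul, norm_inv, Real.norm_eq_abs, abs_of_pos hs] at this
    have := this.le
    calc ‖y s - x‖ = s * (s⁻¹ * ‖y s - x‖) := by field_simp
    _ ≤ s * M := by
        apply mul_le_mul_of_nonneg_left this hs.le
    _ = M * s := mul_comm _ _
  -- ψ lower bound on (0, t)
  have hψlb : ∀ s ∈ Set.Ioo 0 t, (S - η/2) * s ≤ ψ s := by
    intro s hs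
    have hsmem : s ∈ Metric.ball (0:ℝ) δ₂ ∩ (Set.Icc 0 T \ {0}) := by
      constructor
      · simp [Real.ball_eq_Ioo]; constructor <;> [linarith [hs.1, hs.2]; linarith [hs.1, hs.2]]
      · exact ⟨⟨hs.1.le, by linarith [hs.2]⟩, by simp [hs.1.ne']⟩
    have h := hδ₂p hsmem
    simp only [Set.mem_setOf_eq] at h
    have hsl : slope ψ 0 s = ψ s / s := by
      simp [slope_def_field, hψ0]
    rw [hsl] at h
    calc (S - η/2) * s ≤ (ψ s / s) * s := by
          apply mul_le_mul_of_nonneg_right h.le hs.1.le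
    _ = ψ s := div_mul_cancel₀ _ hs.1.ne'
  -- FTC inequality
  have hFTC : (∫ s in (0:ℝ)..t, (S - η/2) * s) ≤ φ t - φ 0 := by
    apply intervalIntegral.integral_le_sub_of_hasDeriv_right_of_le htpos.le
      (hφcont.mono (Set.Icc_subset_Icc le_rfl htT))
    · intro s hs
      exact (hφder s ⟨hs.1.le, le_trans hs.2.le htT⟩).mono_of_mem_nhdsWithin
        (Icc_mem_nhdsGT_of_mem ⟨hs.1.le, lt_of_lt_of_le hs.2 htT⟩)
    · exact (continuous_const.mul continuous_id).integrableOn_Icc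
    · exact hψlb
  have hint : (∫ s in (0:ℝ)..t, (S - η/2) * s) = (S - η/2) * (t^2/2) := by
    rw [intervalIntegral.integral_const_mul, integral_id]
    ring
  -- cone inequality
  have hnorm : ‖y t - x‖ ≤ M * t := hnb t htpos le_rfl
  have hyT : y t ∈ D := hyD t ⟨htpos.le, htT⟩
  have hδ : ‖y t - x‖ ≤ δ₁ := by
    calc ‖y t - x‖ ≤ M * t := hnorm
    _ ≤ M * (δ₁/M) := mul_le_mul_of_nonneg_left htδ₁M (by linarith)
    _ = δ₁ := by field_simp
  have hconeI : φ t ≤ ε * ‖y t - x‖^2 := hδ₁p (y t) hyT hδ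
  have hq : ε * ‖y t - x‖^2 ≤ ε * (M * t)^2 := by
    apply mul_le_mul_of_nonneg_left _ hε.le
    exact pow_le_pow_left₀ (norm_nonneg _) hnorm 2
  -- combine
  have hchain : (S - η/2) * (t^2/2) ≤ ε * (M*t)^2 := by
    rw [← hint]
    calc (∫ s in (0:ℝ)..t, (S - η/2) * s) ≤ φ t - φ 0 := hFTC
    _ = φ t := by rw [hφ0]; ring
    _ ≤ ε * ‖y t - x‖^2 := hconeI
    _ ≤ ε * (M*t)^2 := hq
  have hεM : ε * M^2 = η/4 := by
    rw [hε_def]; field_simp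
  nlinarith [sq_nonneg t, htpos, mul_pos htpos htpos]
end
end
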